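/- Fix $\eta \in (0,1)$ and $p \ge 1$. There exists a constant $c > 0$ such that for all $0 \le s_1 < s_2 \le 1$, the function $h_{s_1,s_2}(t) = \int_0^t \mathbf{1}_{[s_1,s_2]}(r)\,dr$ satisfies $\|h_{s_1,s_2}\|_{W_{\eta,p}} \le c\,(s_2-s_1)^{1-\eta}$, where $\|f\|_{W_{\eta,p}}^p = \int_0^1 |f(t)|^p dt + \iint_{[0,1]^2} \frac{|f(t)-f(s)|^p}{|t-s|^{1+p\eta}}\,dt\,ds$. -/

import Mathlib

open MeasureTheory Set

lemma aux_kernel {p η δ : ℝ} (hη0 : 0 < η) (hη1 : η < 1) (hp : 1 ≤ p) (hδ : 0 < δ) :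
    Integrable (fun u : ℝ => min δ |u| ^ p / |u| ^ (1 + p * η)) ∧
    ∫ u : ℝ, min δ |u| ^ p / |u| ^ (1 + p * η)
      = 2 * (1 / (p * (1 - η)) + 1 / (p * η)) * δ ^ (p * (1 - η)) := by
  have hp0 : 0 < p := lt_of_lt_of_le zero_lt_one hp
  set a : ℝ := p * (1 - η) with ha_def
  set b : ℝ := p * η with hb_def
  have ha : 0 < a := mul_pos hp0 (by linarith)
  have hb : 0 < b := mul_pos hp0 hη0
  set Nf : ℝ → ℝ := fun x => min δ x ^ p / x ^ (1 + p * η) with hNf_def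
  have hr1 : (-1 : ℝ) < p - (1 + p * η) := by
    have : p - (1 + p * η) = a - 1 := by rw [ha_def]; ring
    rw [this]; linarith
  have hr2 : -(1 + p * η) < (-1 : ℝ) := by nlinarith
  -- integrability on Ioc 0 δ
  have h1 : IntegrableOn Nf (Ioc 0 δ) := by
    have h := intervalIntegral.intervalIntegrable_rpow' (a := 0) (b := δ) hr1
    rw [intervalIntegrable_iff_integrableOn_Ioc_of_le hδ.le] at h
    refine h.congr_fun (fun x hx => ?_) measurableSet_Ioc
    have hx0 : 0 < x := hx.1
    rw [hNf_def]
    simp only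
    rw [min_eq_right hx.2, Real.rpow_sub hx0]
  have h2 : IntegrableOn Nf (Ioi δ) := by
    have h := (integrableOn_Ioi_rpow_of_lt hr2 hδ).const_mul (δ ^ p)
    refine IntegrableOn.congr_fun h (fun x hx => ?_) measurableSet_Ioi
    have hx0 : (0 : ℝ) < x := lt_trans hδ hx
    rw [hNf_def]
    simp only
    rw [min_eq_left (le_of_lt hx), Real.rpow_neg hx0.le, div_eq_mul_inv]
  have hIoi : IntegrableOn Nf (Ioi 0) := by
    rw [← Ioc_union_Ioi_eq_Ioi hδ.le]; exact h1.union h2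
  have hint1 : ∫ x in Ioc 0 δ, Nf x = δ ^ a / a := by
    have e1 : ∫ x in Ioc 0 δ, Nf x = ∫ x in Ioc 0 δ, x ^ (p - (1 + p * η)) := by
      refine setIntegral_congr_fun measurableSet_Ioc (fun x hx => ?_)
      rw [hNf_def]; simp only
      rw [min_eq_right hx.2, Real.rpow_sub hx.1]
    rw [e1, ← intervalIntegral.integral_of_le hδ.le,
      integral_rpow (Or.inl hr1)]
    rw [show p - (1 + p * η) + 1 = a by rw [ha_def]; ring]
    rw [Real.zero_rpow ha.ne']
    ring
  have hint2 : ∫ x in Ioi δ, Nf x = δ ^ a / b := by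
    have e1 : ∫ x in Ioi δ, Nf x = ∫ x in Ioi δ, δ ^ p * x ^ (-(1 + p * η)) := by
      refine setIntegral_congr_fun measurableSet_Ioi (fun x hx => ?_)
      rw [hNf_def]; simp only
      rw [min_eq_left (le_of_lt hx), Real.rpow_neg (lt_trans hδ hx).le, div_eq_mul_inv]
    rw [e1, integral_const_mul, integral_Ioi_rpow_of_lt hr2 hδ]
    rw [show -(1 + p * η) + 1 = -b by rw [hb_def]; ring]
    rw [Real.rpow_neg hδ.le]
    have hbne : (δ : ℝ) ^ b ≠ 0 := (Real.rpow_pos_of_pos hδ b).ne'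
    rw [show δ ^ p * (-(δ ^ b)⁻¹ / -b) = δ ^ p / δ ^ b / b by field_simp]
    rw [← Real.rpow_sub hδ, show p - b = a by rw [ha_def, hb_def]; ring]
  have hIoiInt : ∫ x in Ioi 0, Nf x = (1 / a + 1 / b) * δ ^ a := by
    rw [← Ioc_union_Ioi_eq_Ioi hδ.le,
      setIntegral_union (Ioc_disjoint_Ioi le_rfl) measurableSet_Ioi h1 h2, hint1, hint2]
    ring
  -- pass to the even extension
  have habs : IntegrableOn (fun u : ℝ => Nf |u|) (Ioi 0) := by
    refine hIoi.congr_fun (fun x hx => ?_) measurableSet_Ioi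
    rw [abs_of_pos hx]
  have hneg : IntegrableOn (fun u : ℝ => Nf |u|) (Iic 0) := by
    rw [← Measure.map_neg_eq_self (volume : Measure ℝ)]
    have m : MeasurableEmbedding fun x : ℝ => -x :=
      (Homeomorph.neg ℝ).measurableEmbedding
    rw [m.integrableOn_map_iff]
    simp_rw [Function.comp_def, abs_neg, neg_preimage, neg_Iic, neg_zero]
    exact Iff.mpr integrableOn_Ici_iff_integrableOn_Ioi habs
  have hInt : Integrable (fun u : ℝ => Nf |u|) := by
    rw [← integrableOn_univ, ← Iic_union_Ioi (a := (0:ℝ))]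
    exact hneg.union habs
  have hIntEq : ∫ u : ℝ, Nf |u| = 2 * (1 / a + 1 / b) * δ ^ a := by
    rw [integral_comp_abs (f := Nf), hIoiInt]; ring
  have hfun : (fun u : ℝ => min δ |u| ^ p / |u| ^ (1 + p * η)) = fun u : ℝ => Nf |u| := rfl
  rw [hfun]
  exact ⟨hInt, hIntEq⟩

theorem stmt_1 (η p : ℝ) (hη : η ∈ Set.Ioo (0:ℝ) 1) (hp : 1 ≤ p) :
    ∃ c > 0, ∀ s₁ s₂ : ℝ, 0 ≤ s₁ → s₁ < s₂ → s₂ ≤ 1 →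
      ((∫ t in Set.Icc (0:ℝ) 1,
          |∫ r in (0:ℝ)..t, (Set.Icc s₁ s₂).indicator (fun _ => (1:ℝ)) r| ^ p)
       + ∫ st in (Set.Icc (0:ℝ) 1 ×ˢ Set.Icc (0:ℝ) 1),
          |(∫ r in (0:ℝ)..st.2, (Set.Icc s₁ s₂).indicator (fun _ => (1:ℝ)) r)
            - (∫ r in (0:ℝ)..st.1, (Set.Icc s₁ s₂).indicator (fun _ => (1:ℝ)) r)| ^ p
            / |st.2 - st.1| ^ (1 + p * η)) ^ (1/p)
      ≤ c * (s₂ - s₁) ^ (1 - η) := by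
  obtain ⟨hη0, hη1⟩ := hη
  have hp0 : 0 < p := lt_of_lt_of_le zero_lt_one hp
  set a : ℝ := p * (1 - η) with ha_def
  set b : ℝ := p * η with hb_def
  have ha : 0 < a := mul_pos hp0 (by linarith)
  have hb : 0 < b := mul_pos hp0 hη0
  set K : ℝ := 1 + 2 * (1 / a + 1 / b) with hK_def
  have hK : 0 < K := by positivity
  refine ⟨K ^ (1/p), Real.rpow_pos_of_pos hK _, fun s₁ s₂ hs₁ hs₁₂ hs₂ => ?_⟩
  set δ : ℝ := s₂ - s₁ with hδ_def
  have hδ : 0 < δ := by simp [hδ_def]; linarith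
  have hδ1 : δ ≤ 1 := by simp [hδ_def]; linarith
  set ind : ℝ → ℝ := (Set.Icc s₁ s₂).indicator (fun _ => (1:ℝ)) with hind_def
  set I : ℝ → ℝ := fun t => ∫ r in (0:ℝ)..t, ind r with hI_def
  -- basic facts about the indicator
  have hind_nonneg : ∀ r, 0 ≤ ind r := fun r =>
    Set.indicator_nonneg (fun _ _ => zero_le_one) r
  have hind_le_one : ∀ r, ind r ≤ 1 := fun r =>
    Set.indicator_le' (fun _ _ => le_rfl) (fun _ _ => zero_le_one) r
  have hind_int : Integrable ind := by
    rw [hind_def, integrable_indicator_iff measurableSet_Icc]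
    refine integrableOn_const (ne_of_lt ?_)
    rw [Real.volume_Icc]
    exact ENNReal.ofReal_lt_top
  have hind_total : ∫ r, ind r = δ := by
    rw [hind_def, integral_indicator_const (1:ℝ) measurableSet_Icc, Real.volume_real_Icc,
      smul_eq_mul, mul_one, max_eq_left (by linarith)]
  -- the key Lipschitz-type bound
  have key : ∀ s t : ℝ, |I t - I s| ≤ min δ |t - s| := by
    intro s t
    have hsub : I t - I s = ∫ r in s..t, ind r := by
      rw [hI_def]
      exact intervalIntegral.integral_interval_sub_left
        hind_int.intervalIntegrable hind_int.intervalIntegrable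
    rw [hsub]
    refine le_min ?_ ?_
    · -- bounded by δ
      rcases le_total s t with h | h
      · rw [intervalIntegral.integral_of_le h,
          abs_of_nonneg (setIntegral_nonneg measurableSet_Ioc (fun r _ => hind_nonneg r))]
        calc ∫ r in Set.Ioc s t, ind r ≤ ∫ r, ind r :=
              setIntegral_le_integral hind_int (Filter.Eventually.of_forall hind_nonneg)
          _ = δ := hind_total
      · rw [intervalIntegral.integral_of_ge h, abs_neg,
          abs_of_nonneg (setIntegral_nonneg measurableSet_Ioc (fun r _ => hind_nonneg r))]
        calc ∫ r in Set.Ioc t s, ind r ≤ ∫ r, ind r :=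
              setIntegral_le_integral hind_int (Filter.Eventually.of_forall hind_nonneg)
          _ = δ := hind_total
    · -- bounded by |t - s|
      have := intervalIntegral.norm_integral_le_of_norm_le_const (C := 1)
        (f := ind) (a := s) (b := t) ?_
      · rw [Real.norm_eq_abs] at this
        simpa using this
      · intro x _
        rw [Real.norm_eq_abs, abs_of_nonneg (hind_nonneg x)]
        exact hind_le_one x
  have hI0 : I 0 = 0 := intervalIntegral.integral_same
  have hIbd : ∀ t, |I t| ≤ δ := by
    intro t
    have := key 0 t
    rw [hI0, sub_zero] at this
    exact this.trans (min_le_left _ _)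
  have hIcont : Continuous I := by
    have : LipschitzWith 1 I := by
      refine LipschitzWith.of_dist_le_mul (fun t s => ?_)
      rw [Real.dist_eq, Real.dist_eq]
      have := (key s t).trans (min_le_right _ _)
      simpa using this
    exact this.continuous
  have hImeas : Measurable I := hIcont.measurable
  -- first term
  set T1 : ℝ := ∫ t in Set.Icc (0:ℝ) 1, |I t| ^ p with hT1_def
  have hT1nonneg : 0 ≤ T1 :=
    integral_nonneg (fun t => Real.rpow_nonneg (abs_nonneg _) p)
  have hT1 : T1 ≤ δ ^ a := by
    have hb1 : ∀ t : ℝ, |I t| ^ p ≤ δ ^ a := by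
      intro t
      calc |I t| ^ p ≤ δ ^ p :=
            Real.rpow_le_rpow (abs_nonneg _) (hIbd t) hp0.le
        _ ≤ δ ^ a := by
            refine Real.rpow_le_rpow_of_exponent_ge hδ hδ1 ?_
            rw [ha_def]
            nlinarith
    calc T1 ≤ ∫ _t in Set.Icc (0:ℝ) 1, δ ^ a := by
          refine integral_mono_of_nonneg
            (Filter.Eventually.of_forall (fun t => Real.rpow_nonneg (abs_nonneg _) p))
            (integrableOn_const (ne_of_lt (by rw [Real.volume_Icc]; exact ENNReal.ofReal_lt_top)))
            (Filter.Eventually.of_forall hb1)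
      _ = δ ^ a := by
          rw [setIntegral_const, Real.volume_real_Icc, smul_eq_mul]
          norm_num
  -- second term
  set F : ℝ × ℝ → ℝ := fun st => |I st.2 - I st.1| ^ p / |st.2 - st.1| ^ (1 + p * η)
    with hF_def
  set N : ℝ → ℝ := fun u => min δ |u| ^ p / |u| ^ (1 + p * η) with hN_def
  obtain ⟨hNint, hNeq⟩ := aux_kernel hη0 hη1 hp hδ
  have hNnonneg : ∀ u, 0 ≤ N u := fun u =>
    div_nonneg (Real.rpow_nonneg (le_min hδ.le (abs_nonneg _)) p)
      (Real.rpow_nonneg (abs_nonneg _) _)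
  have hNmeas : Measurable N := by
    exact ((measurable_const.min measurable_abs).pow_const p).div
      (measurable_abs.pow_const _)
  have hFnonneg : ∀ st, 0 ≤ F st := fun st =>
    div_nonneg (Real.rpow_nonneg (abs_nonneg _) p) (Real.rpow_nonneg (abs_nonneg _) _)
  have hFmeas : Measurable F := by
    exact (((hImeas.comp measurable_snd).sub (hImeas.comp measurable_fst)).abs.pow_const p).div
      ((measurable_snd.sub measurable_fst).abs.pow_const _)
  have hFN : ∀ st : ℝ × ℝ, F st ≤ N (st.2 - st.1) := by
    intro st
    by_cases h : st.2 - st.1 = 0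
    · have h2 : st.2 = st.1 := sub_eq_zero.mp h
      rw [hF_def, hN_def]
      simp only [h2, sub_self, abs_zero]
      rw [Real.zero_rpow (by positivity : (1:ℝ) + p * η ≠ 0), div_zero, div_zero]
    · have hc : 0 < |st.2 - st.1| := abs_pos.mpr h
      rw [hF_def, hN_def]
      simp only
      rw [div_le_div_iff_of_pos_right (Real.rpow_pos_of_pos hc _)]
      exact Real.rpow_le_rpow (abs_nonneg _) (key st.1 st.2) hp0.le
  set T2 : ℝ := ∫ st in (Set.Icc (0:ℝ) 1 ×ˢ Set.Icc (0:ℝ) 1), F st with hT2_def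
  have hT2nonneg : 0 ≤ T2 := integral_nonneg (fun st => hFnonneg st)
  have hT2 : T2 ≤ 2 * (1 / a + 1 / b) * δ ^ a := by
    have heq : T2 = (∫⁻ st in (Set.Icc (0:ℝ) 1 ×ˢ Set.Icc (0:ℝ) 1),
        ENNReal.ofReal (F st)).toReal :=
      integral_eq_lintegral_of_nonneg_ae (Filter.Eventually.of_forall hFnonneg)
        hFmeas.aestronglyMeasurable
    have hchain : ∫⁻ st in (Set.Icc (0:ℝ) 1 ×ˢ Set.Icc (0:ℝ) 1), ENNReal.ofReal (F st)
        ≤ ENNReal.ofReal (2 * (1 / a + 1 / b) * δ ^ a) := by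
      calc ∫⁻ st in (Set.Icc (0:ℝ) 1 ×ˢ Set.Icc (0:ℝ) 1), ENNReal.ofReal (F st)
          ≤ ∫⁻ st in (Set.Icc (0:ℝ) 1 ×ˢ Set.Icc (0:ℝ) 1),
              ENNReal.ofReal (N (st.2 - st.1)) :=
            lintegral_mono (fun st => ENNReal.ofReal_le_ofReal (hFN st))
        _ ≤ ∫⁻ st in (Set.Icc (0:ℝ) 1 ×ˢ (Set.univ : Set ℝ)),
              ENNReal.ofReal (N (st.2 - st.1)) :=
            lintegral_mono_set (Set.prod_mono_right (Set.subset_univ _))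
        _ = ∫⁻ s in Set.Icc (0:ℝ) 1, ∫⁻ t, ENNReal.ofReal (N (t - s)) := by
            rw [show (volume : Measure (ℝ × ℝ)).restrict (Set.Icc (0:ℝ) 1 ×ˢ Set.univ)
                = (volume.restrict (Set.Icc (0:ℝ) 1)).prod volume from by
              rw [Measure.volume_eq_prod, ← Measure.prod_restrict, Measure.restrict_univ]]
            exact lintegral_prod _
              ((hNmeas.comp (measurable_snd.sub measurable_fst)).ennreal_ofReal.aemeasurable)
        _ = ∫⁻ _s in Set.Icc (0:ℝ) 1, ∫⁻ t, ENNReal.ofReal (N t) := by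
            refine lintegral_congr (fun s => ?_)
            exact lintegral_sub_right_eq_self (fun t => ENNReal.ofReal (N t)) s
        _ = (∫⁻ t, ENNReal.ofReal (N t)) * volume (Set.Icc (0:ℝ) 1) := by
            rw [lintegral_const, Measure.restrict_apply_univ]
        _ = ENNReal.ofReal (∫ t, N t) := by
            rw [← ofReal_integral_eq_lintegral_ofReal hNint
              (Filter.Eventually.of_forall hNnonneg), Real.volume_Icc]
            norm_num
            rfl
        _ = ENNReal.ofReal (2 * (1 / a + 1 / b) * δ ^ a) := by
            simp only [hN_def]; rw [ha_def, hb_def, hNeq]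
    rw [heq]
    calc (∫⁻ st in (Set.Icc (0:ℝ) 1 ×ˢ Set.Icc (0:ℝ) 1), ENNReal.ofReal (F st)).toReal
        ≤ (ENNReal.ofReal (2 * (1 / a + 1 / b) * δ ^ a)).toReal :=
          ENNReal.toReal_mono ENNReal.ofReal_ne_top hchain
      _ = 2 * (1 / a + 1 / b) * δ ^ a := ENNReal.toReal_ofReal (by positivity)
  -- combine
  have hsum : T1 + T2 ≤ K * δ ^ a := by
    have hexp : K * δ ^ a = δ ^ a + 2 * (1 / a + 1 / b) * δ ^ a := by rw [hK_def]; ring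
    rw [hexp]
    exact add_le_add hT1 hT2
  have final : (T1 + T2) ^ (1/p) ≤ K ^ (1/p) * δ ^ (1 - η) := by
    calc (T1 + T2) ^ (1/p) ≤ (K * δ ^ a) ^ (1/p) :=
          Real.rpow_le_rpow (add_nonneg hT1nonneg hT2nonneg) hsum (by positivity)
      _ = K ^ (1/p) * (δ ^ a) ^ (1/p) := Real.mul_rpow hK.le (Real.rpow_nonneg hδ.le a)
      _ = K ^ (1/p) * δ ^ (1 - η) := by
          rw [← Real.rpow_mul hδ.le, show a * (1/p) = 1 - η by
            rw [ha_def]; field_simp]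
  exact final
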